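/- Let G be a finite group, H a normal subgroup of prime index p, x in G a lift of a generator of G/H, and F a field of characteristic 0 or coprime to |G| with algebraic closure F̄. Let η be an irreducible F-representation of H with η ⊗_F F̄ ≅ m(η_1 ⊕ … ⊕ η_k), the η_i Galois conjugate over F, and suppose each e_{η_i} is central in F̄[G], so that (C̄(x))^p e_{η_i} = λ_i e_{η_i} with λ_i ≠ 0; let μ_i be a p-th root of λ_i in F̄. Then either λ_i has a p-th root in F for every i, 1 ≤ i ≤ k — and in that case these p-th roots in F are all equal to a common value μ ∈ F — or λ_i has no p-th root in F for any i, 1 ≤ i ≤ k. -/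

import Mathlib

open scoped TensorProduct

section Defs

variable {k : Type*} [Field k] {M : Type*} [Monoid M]

/-- Equivalence (isomorphism) of representations of a monoid over a field. -/
def RepIso {V W : Type*} [AddCommGroup V] [Module k V] [AddCommGroup W] [Module k W]
    (ρ : Representation k M V) (ρ' : Representation k M W) : Prop :=
  ∃ e : V ≃ₗ[k] W, ∀ (g : M) (v : V), e (ρ g v) = ρ' g (e v)

/-- Irreducibility of a representation: the space is nonzero and has no proper nonzero
invariant subspace. -/
def RepIrred {V : Type*} [AddCommGroup V] [Module k V] (ρ : Representation k M V) : Prop :=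
  Nontrivial V ∧ ∀ U : Submodule k V, (∀ g : M, ∀ v ∈ U, ρ g v ∈ U) → U = ⊥ ∨ U = ⊤

variable {G : Type*} [Group G]

/-- Conjugation by `x` as a monoid homomorphism of a normal subgroup. -/
def conjHom {H : Subgroup G} (hH : H.Normal) (x : G) : H →* H :=
  MonoidHom.mk' (fun h => ⟨x * (h : G) * x⁻¹, hH.conj_mem (h : G) h.2 x⟩)
    (by intro a b; ext; push_cast; group)

/-- The conjugate representation `η^x`, `η^x(h) = η (x h x⁻¹)`. -/
def ConjRep {H : Subgroup G} (hH : H.Normal) (x : G) {V : Type*} [AddCommGroup V] [Module k V]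
    (η : Representation k H V) : Representation k H V :=
  η.comp (conjHom hH x)

/-- `ρ` is (a model of) the representation of `G` induced from the representation `η` of the
subgroup `H`: there is an `H`-equivariant embedding `ι : V → W` and `W` is the internal direct
sum, over the cosets `gH`, of the translates `ρ(g)(ι V)`. -/
def IsInducedFrom (H : Subgroup G) {V W : Type*} [AddCommGroup V] [Module k V]
    [AddCommGroup W] [Module k W]
    (η : Representation k H V) (ρ : Representation k G W) : Prop :=
  ∃ ι : V →ₗ[k] W, Function.Injective ι ∧
    (∀ (h : H) (v : V), ι (η h v) = ρ (h : G) (ι v)) ∧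
    ∃ S : G ⧸ H → Submodule k W,
      (∀ g : G, S (g : G ⧸ H) = (LinearMap.range ι).map (ρ g)) ∧
      iSupIndep S ∧ iSup S = ⊤

/-- The subrepresentation on an invariant subspace. -/
def SubRep {V : Type*} [AddCommGroup V] [Module k V] (ρ : Representation k M V)
    (U : Submodule k V) (hU : ∀ g : M, ∀ v ∈ U, ρ g v ∈ U) : Representation k M U where
  toFun g := LinearMap.restrict (ρ g) (hU g)
  map_one' := by ext v; simp [LinearMap.restrict_apply]
  map_mul' g g' := by ext v; simp [LinearMap.restrict_apply]

/-- The direct sum of a family of representations (realized on the product space). -/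
def PiRep {ι : Type*} {W : ι → Type*} [∀ i, AddCommGroup (W i)] [∀ i, Module k (W i)]
    (ρ : ∀ i, Representation k M (W i)) : Representation k M (∀ i, W i) where
  toFun g := LinearMap.pi fun i => (ρ i g).comp (LinearMap.proj i)
  map_one' := by ext v; simp
  map_mul' g g' := by ext v; simp

/-- Extension of scalars of a representation along a field extension `F ⊆ E`. -/
noncomputable def BaseChangeRep {F : Type*} [Field F] (E : Type*) [Field E] [Algebra F E]
    {V : Type*} [AddCommGroup V] [Module F V] (ρ : Representation F M V) :
    Representation E M (E ⊗[F] V) where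
  toFun g := LinearMap.baseChange E (ρ g)
  map_one' := by ext v; simp
  map_mul' g g' := by ext v; simp [map_mul]

open scoped Classical in
/-- The conjugacy class sum of `x` in the group algebra. -/
noncomputable def classSum (k : Type*) [Field k] {G : Type*} [Group G] [Fintype G] (x : G) :
    MonoidAlgebra k G :=
  ∑ g : G, if IsConj x g then MonoidAlgebra.single g (1 : k) else 0

/-- A primitive central idempotent of a ring. -/
def IsPrimCentralIdem {R : Type*} [Ring R] (e : R) : Prop :=
  e ≠ 0 ∧ IsIdempotentElem e ∧ e ∈ Set.center R ∧
    ∀ f : R, f ∈ Set.center R → IsIdempotentElem f → f * e = f → f = 0 ∨ f = e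

/-- `e` is the primitive central idempotent of the group algebra attached to the irreducible
representation `ρ`: it is a primitive central idempotent acting as the identity on `ρ`. -/
noncomputable def IsIdemFor {V : Type*} [AddCommGroup V] [Module k V]
    (ρ : Representation k M V) (e : MonoidAlgebra k M) : Prop :=
  IsPrimCentralIdem e ∧ ρ.asAlgebraHom e = 1

/-- `ρ'` is the twist of the `E`-representation `ρ` by the automorphism `γ` of `E` over `F`. -/
def IsTwist {F E : Type*} [Field F] [Field E] [Algebra F E]
    {V W : Type*} [AddCommGroup V] [Module E V] [AddCommGroup W] [Module E W]
    (γ : E ≃ₐ[F] E) (ρ : Representation E M V) (ρ' : Representation E M W) : Prop :=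
  ∃ e : V ≃+ W, (∀ (c : E) (v : V), e (c • v) = γ c • e v) ∧
    ∀ (g : M) (v : V), e (ρ g v) = ρ' g (e v)

/-- Two `E`-representations are Galois conjugate over `F`. -/
def IsGaloisConj (F : Type*) {E : Type*} [Field F] [Field E] [Algebra F E]
    {V W : Type*} [AddCommGroup V] [Module E V] [AddCommGroup W] [Module E W]
    (ρ : Representation E M V) (ρ' : Representation E M W) : Prop :=
  ∃ γ : E ≃ₐ[F] E, IsTwist γ ρ ρ'

/-- The canonical embedding of the group algebra of a subgroup into the group algebra
of the ambient group. -/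
noncomputable def algEmb (k : Type*) [Field k] {G : Type*} [Group G] (H : Subgroup G) :
    MonoidAlgebra k H →ₐ[k] MonoidAlgebra k G :=
  MonoidAlgebra.mapDomainAlgHom k k H.subtype

end Defs



section Aux


variable {E : Type*} [Field E] {M : Type*} [Monoid M]

/-- Coefficientwise application of a ring hom to a group algebra, as a ring hom. -/
noncomputable def coeffHom (γ : E →+* E) : MonoidAlgebra E M →+* MonoidAlgebra E M :=
  MonoidAlgebra.liftNCRingHom (MonoidAlgebra.singleOneRingHom.comp γ) (MonoidAlgebra.of E M)
    (fun {r g} => by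
      show MonoidAlgebra.single (1 : M) (γ r) * MonoidAlgebra.single g 1
          = MonoidAlgebra.single g 1 * MonoidAlgebra.single (1 : M) (γ r)
      rw [MonoidAlgebra.single_mul_single, MonoidAlgebra.single_mul_single]
      simp)

lemma coeffHom_single (γ : E →+* E) (g : M) (r : E) :
    coeffHom γ (MonoidAlgebra.single g r) = MonoidAlgebra.single g (γ r) := by
  have h : coeffHom γ (MonoidAlgebra.single g r)
      = MonoidAlgebra.liftNC
          ((MonoidAlgebra.singleOneRingHom.comp γ : E →+* MonoidAlgebra E M) :
            E →+ MonoidAlgebra E M)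
          ⇑(MonoidAlgebra.of E M) (MonoidAlgebra.single g r) := rfl
  rw [h, MonoidAlgebra.liftNC_single]
  show MonoidAlgebra.single (1 : M) (γ r) * MonoidAlgebra.single g 1 = _
  rw [MonoidAlgebra.single_mul_single]
  simp

/-- Coefficientwise application of a field automorphism, as a ring equivalence. -/
noncomputable def coeffEquiv (γ : E ≃+* E) : MonoidAlgebra E M ≃+* MonoidAlgebra E M :=
  RingEquiv.ofRingHom (coeffHom (γ : E →+* E)) (coeffHom (γ.symm : E →+* E))
    (by apply MonoidAlgebra.ringHom_ext <;> intro b <;>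
          simp [coeffHom_single, MonoidAlgebra.one_def])
    (by apply MonoidAlgebra.ringHom_ext <;> intro b <;>
          simp [coeffHom_single, MonoidAlgebra.one_def])

lemma coeffEquiv_single (γ : E ≃+* E) (g : M) (r : E) :
    coeffEquiv γ (MonoidAlgebra.single g r) = MonoidAlgebra.single g (γ r) :=
  coeffHom_single _ g r

lemma coeffEquiv_smul (γ : E ≃+* E) (c : E) (a : MonoidAlgebra E M) :
    coeffEquiv γ (c • a) = γ c • coeffEquiv γ a := by
  rw [Algebra.smul_def, Algebra.smul_def, map_mul]
  congr 1
  show coeffEquiv γ (MonoidAlgebra.single 1 c) = MonoidAlgebra.single 1 (γ c)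
  exact coeffEquiv_single γ 1 c


end Aux


section Aux2

variable {E : Type*} [Field E] {M : Type*} [Monoid M]

lemma twist_asAlgebraHom (γ : E ≃+* E)
    {V W : Type*} [AddCommGroup V] [Module E V] [AddCommGroup W] [Module E W]
    (ρ : Representation E M V) (ρ' : Representation E M W)
    (eqv : V ≃+ W) (hsm : ∀ (c : E) (v : V), eqv (c • v) = γ c • eqv v)
    (hcomm : ∀ (g : M) (v : V), eqv (ρ g v) = ρ' g (eqv v))
    (a : MonoidAlgebra E M) (v : V) :
    eqv (ρ.asAlgebraHom a v) = (ρ'.asAlgebraHom (coeffEquiv γ a)) (eqv v) := by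
  induction a using MonoidAlgebra.induction_linear with
  | zero => simp
  | add f g hf hg => simp only [map_add, LinearMap.add_apply, hf, hg]
  | single g r =>
      have h1 : coeffEquiv γ (MonoidAlgebra.single g r) = MonoidAlgebra.single g (γ r) :=
        coeffEquiv_single γ g r
      rw [h1, Representation.asAlgebraHom_single, Representation.asAlgebraHom_single,
        LinearMap.smul_apply, LinearMap.smul_apply, hsm, hcomm]

/-- Uniqueness of the primitive central idempotent acting as the identity on a
representation on a nontrivial space. -/
lemma isIdemFor_unique {V : Type*} [AddCommGroup V] [Module E V] [Nontrivial V]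
    (ρ : Representation E M V) {a b : MonoidAlgebra E M}
    (ha : IsIdemFor ρ a) (hb : IsIdemFor ρ b) : a = b := by
  obtain ⟨⟨ha0, haid, hac, hapr⟩, ha1⟩ := ha
  obtain ⟨⟨hb0, hbid, hbc, hbpr⟩, hb1⟩ := hb
  have hcomm : a * b = b * a := (Set.mem_center_iff.mp hac).comm b
  have habc : a * b ∈ Set.center (MonoidAlgebra E M) := Set.mul_mem_center hac hbc
  have habid : IsIdempotentElem (a * b) := by
    show a * b * (a * b) = a * b
    rw [mul_assoc a b (a * b), ← mul_assoc b a b, ← hcomm, mul_assoc a b b, hbid.eq,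
      ← mul_assoc a a b, haid.eq]
  have hne : a * b ≠ 0 := by
    intro h
    have h1 : ρ.asAlgebraHom (a * b) = 1 := by rw [map_mul, ha1, hb1, one_mul]
    rw [h, map_zero] at h1
    obtain ⟨v, hv⟩ := exists_ne (0 : V)
    apply hv
    calc v = (1 : Module.End E V) v := rfl
    _ = (0 : Module.End E V) v := by rw [← h1]
    _ = 0 := rfl
  have h1 := hbpr (a * b) habc habid (by rw [mul_assoc, hbid.eq])
  have h2 := hapr (a * b) habc habid
    (by rw [hcomm, mul_assoc, haid.eq, ← hcomm])
  rcases h1 with h1 | h1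
  · exact absurd h1 hne
  rcases h2 with h2 | h2
  · exact absurd h2 hne
  rw [← h2, h1]

/-- Transfer of `IsIdemFor` along a twist. -/
lemma isIdemFor_map (γ : E ≃+* E)
    {V W : Type*} [AddCommGroup V] [Module E V] [AddCommGroup W] [Module E W]
    (ρ : Representation E M V) (ρ' : Representation E M W)
    (eqv : V ≃+ W) (hsm : ∀ (c : E) (v : V), eqv (c • v) = γ c • eqv v)
    (hcomm : ∀ (g : M) (v : V), eqv (ρ g v) = ρ' g (eqv v))
    {a : MonoidAlgebra E M} (ha : IsIdemFor ρ a) : IsIdemFor ρ' (coeffEquiv γ a) := by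
  obtain ⟨⟨ha0, haid, hac, hapr⟩, ha1⟩ := ha
  refine ⟨⟨?_, ?_, ?_, ?_⟩, ?_⟩
  · intro h
    apply ha0
    have h2 := congrArg (coeffEquiv γ).symm h
    simpa using h2
  · show coeffEquiv γ a * coeffEquiv γ a = coeffEquiv γ a
    rw [← map_mul, haid.eq]
  · rw [Semigroup.mem_center_iff] at hac ⊢
    intro g
    calc g * coeffEquiv γ a
        = coeffEquiv γ ((coeffEquiv γ).symm g * a) := by
          rw [map_mul, RingEquiv.apply_symm_apply]
      _ = coeffEquiv γ (a * (coeffEquiv γ).symm g) := by rw [hac]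
      _ = coeffEquiv γ a * g := by rw [map_mul, RingEquiv.apply_symm_apply]
  · intro f hfc hfid hfa
    have hfc' : (coeffEquiv γ).symm f ∈ Set.center (MonoidAlgebra E M) := by
      rw [Semigroup.mem_center_iff] at hfc ⊢
      intro g
      apply (coeffEquiv γ).injective
      rw [map_mul, map_mul, RingEquiv.apply_symm_apply]
      exact hfc (coeffEquiv γ g)
    have hfid' : IsIdempotentElem ((coeffEquiv γ).symm f) := hfid.map (coeffEquiv γ).symm
    have hfa' : (coeffEquiv γ).symm f * a = (coeffEquiv γ).symm f := by
      apply (coeffEquiv γ).injective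
      rw [map_mul, RingEquiv.apply_symm_apply, hfa]
    rcases hapr ((coeffEquiv γ).symm f) hfc' hfid' hfa' with h | h
    · left
      have := congrArg (coeffEquiv γ) h
      simpa using this
    · right
      have := congrArg (coeffEquiv γ) h
      simpa using this
  · apply LinearMap.ext
    intro w
    have h := twist_asAlgebraHom γ ρ ρ' eqv hsm hcomm a (eqv.symm w)
    rw [ha1] at h
    simp only [Module.End.one_apply, AddEquiv.apply_symm_apply] at h ⊢
    exact h.symm

end Aux2

section Aux3

variable {E : Type*} [Field E] {G : Type*} [Group G]

lemma algEmb_single (H : Subgroup G) (h : H) (r : E) :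
    algEmb E H (MonoidAlgebra.single h r) = MonoidAlgebra.single (h : G) r := by
  simp [algEmb, Finsupp.mapDomain_single]

lemma algEmb_injective (H : Subgroup G) : Function.Injective (algEmb E H) := by
  intro a b hab
  simp only [algEmb, MonoidAlgebra.mapDomainAlgHom_apply] at hab
  exact MonoidAlgebra.mapDomain_injective H.subtype_injective hab

lemma coeffEquiv_algEmb (γ : E ≃+* E) (H : Subgroup G) (a : MonoidAlgebra E H) :
    coeffEquiv γ (algEmb E H a) = algEmb E H (coeffEquiv γ a) := by
  induction a using MonoidAlgebra.induction_linear with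
  | zero => simp
  | add f g hf hg => rw [map_add, map_add, map_add, map_add, hf, hg]
  | single g r =>
      have h1 : coeffEquiv γ (MonoidAlgebra.single g r) = MonoidAlgebra.single g (γ r) :=
        coeffEquiv_single γ g r
      have h2 : coeffEquiv γ (MonoidAlgebra.single (g : G) r) = MonoidAlgebra.single (g : G) (γ r) :=
        coeffEquiv_single γ (g : G) r
      rw [h1]
      rw [algEmb_single, algEmb_single]
      exact h2

lemma coeffEquiv_classSum (γ : E ≃+* E) [Fintype G] (x : G) :
    coeffEquiv γ (classSum E x) = classSum E x := by
  classical
  unfold classSum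
  rw [map_sum]
  refine Finset.sum_congr rfl fun g _ => ?_
  rw [apply_ite (coeffEquiv γ), map_zero]
  congr 1
  rw [coeffEquiv_single, map_one]

end Aux3


/-- Either every `λ_i` has a `p`-th root in `F` — and then these roots are all
equal to a common value `μ ∈ F` — or no `λ_i` has a `p`-th root in `F`. -/
theorem stmt_16 {F : Type*} [Field F] {G : Type*} [Group G] [Fintype G]
    (hchar : CharZero F ∨ Nat.Coprime (ringChar F) (Fintype.card G))
    (p : ℕ) (hp : p.Prime) (H : Subgroup G) [hH : H.Normal] (hidx : H.index = p)
    (x : G) (hx : Subgroup.zpowers ((x : G ⧸ H)) = ⊤)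
    {V : Type*} [AddCommGroup V] [Module F V]
    (η : Representation F H V) (hirr : RepIrred η)
    (k m : ℕ) {W : Fin k → Type*} [∀ i, AddCommGroup (W i)]
    [∀ i, Module (AlgebraicClosure F) (W i)]
    (ηs : ∀ i, Representation (AlgebraicClosure F) H (W i))
    (hirrs : ∀ i, RepIrred (ηs i))
    (hsdist : ∀ i j, i ≠ j → ¬ RepIso (ηs i) (ηs j))
    (hgal : ∀ i j, IsGaloisConj F (ηs i) (ηs j))
    (hdec : RepIso (BaseChangeRep (AlgebraicClosure F) η)
      (PiRep fun q : Fin m × Fin k => ηs q.2))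
    (e : Fin k → MonoidAlgebra (AlgebraicClosure F) H)
    (he : ∀ i, IsIdemFor (ηs i) (e i))
    (hcents : ∀ i, algEmb (AlgebraicClosure F) H (e i) ∈
      Set.center (MonoidAlgebra (AlgebraicClosure F) G))
    (lam : Fin k → AlgebraicClosure F) (hlam : ∀ i, lam i ≠ 0)
    (hcl : ∀ i, classSum (AlgebraicClosure F) x ^ p * algEmb (AlgebraicClosure F) H (e i)
      = lam i • algEmb (AlgebraicClosure F) H (e i)) :
    (∃ mu : F, ∀ i, algebraMap F (AlgebraicClosure F) mu ^ p = lam i) ∨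
    (∀ i, ¬ ∃ mu : F, algebraMap F (AlgebraicClosure F) mu ^ p = lam i) := by
  classical
  by_cases hex : ∃ i0 : Fin k, ∃ mu : F, algebraMap F (AlgebraicClosure F) mu ^ p = lam i0
  · obtain ⟨i0, mu, hmu⟩ := hex
    left
    refine ⟨mu, fun j => ?_⟩
    obtain ⟨γ, eqv, hsm, hcomm⟩ := hgal i0 j
    have hnt : Nontrivial (W j) := (hirrs j).1
    have hsm' : ∀ (c : AlgebraicClosure F) (v : W i0),
        eqv (c • v) = γ.toRingEquiv c • eqv v := hsm
    have hidem : IsIdemFor (ηs j) (coeffEquiv γ.toRingEquiv (e i0)) :=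
      isIdemFor_map γ.toRingEquiv (ηs i0) (ηs j) eqv hsm' hcomm (he i0)
    have hGe : coeffEquiv γ.toRingEquiv (e i0) = e j :=
      isIdemFor_unique (ηs j) hidem (he j)
    have step := congrArg (coeffEquiv (M := G) γ.toRingEquiv) (hcl i0)
    rw [map_mul, map_pow, coeffEquiv_classSum, coeffEquiv_smul, coeffEquiv_algEmb,
      hGe, hcl j] at step
    -- step : lam j • algEmb (e j) = γ (lam i0) • algEmb (e j)
    have hne : algEmb (AlgebraicClosure F) H (e j) ≠ 0 := by
      intro h
      exact (he j).1.1 (algEmb_injective H (by rw [h, map_zero]))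
    have hsub : (lam j - γ.toRingEquiv (lam i0)) • algEmb (AlgebraicClosure F) H (e j) = 0 := by
      rw [sub_smul, step, sub_self]
    rcases smul_eq_zero.mp hsub with h | h
    · have hlj : lam j = γ.toRingEquiv (lam i0) := sub_eq_zero.mp h
      rw [hlj, ← hmu, map_pow]
      congr 1
      exact (γ.commutes mu).symm
    · exact absurd h hne
  · right
    intro i hi
    exact hex ⟨i, hi⟩
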